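/- Let F ⊂ B(0,1) ⊂ ℝ^d be compact, and for each n let F be covered by N_1·N_2⋯N_n balls of radius r_1·r_2⋯r_n, where N_i ≥ 1 are integers and r_i ∈ [r_min, r_max] ⊂ (0,1). Then for ε with r_1⋯r_n < ε ≤ r_1⋯r_{n−1}, L^d(⟨F⟩_ε) ≤ (1 + 1/r_min)^d · V_d · Π_{i=1}^n (r_i^d N_i). -/
import Mathlib


open MeasureTheory Metric Filter Set Finset

/-- Upper volume bound in the equicontractive case: if `F ⊆ B(0,1)` is covered by
`N_1⋯N_n` balls of radius `r_1⋯r_n` and `r_1⋯r_n < ε ≤ r_1⋯r_{n−1}`, then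
`L^d(⟨F⟩_ε) ≤ (1 + 1/r_min)^d · V_d · Π_i (r_i^d N_i)`. -/
theorem stmt14 (d : ℕ) (hd : 1 ≤ d) (F : Set (EuclideanSpace ℝ (Fin d)))
    (hF : IsCompact F) (hFK : F ⊆ closedBall (0 : EuclideanSpace ℝ (Fin d)) 1)
    (rmin rmax : ℝ) (hrmin : 0 < rmin) (hrmax : rmax < 1)
    (r : ℕ → ℝ) (hr : ∀ i, r i ∈ Set.Icc rmin rmax)
    (N : ℕ → ℕ) (hN : ∀ i, 1 ≤ N i) (n : ℕ) (hn : 1 ≤ n)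
    (x : Fin (∏ i ∈ range n, N i) → EuclideanSpace ℝ (Fin d))
    (hcover : F ⊆ ⋃ j, closedBall (x j) (∏ i ∈ range n, r i))
    (ε : ℝ) (hεl : ∏ i ∈ range n, r i < ε) (hεu : ε ≤ ∏ i ∈ range (n - 1), r i) :
    volume (cthickening ε F) ≤
      ENNReal.ofReal ((1 + 1 / rmin) ^ d * ∏ i ∈ range n, (r i ^ d * N i)) *
        volume (ball (0 : EuclideanSpace ℝ (Fin d)) 1) := by
  set R : ℝ := ∏ i ∈ range n, r i with hR
  have hri : ∀ i, 0 < r i := fun i => hrmin.trans_le (hr i).1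
  have hRpos : 0 < R := Finset.prod_pos (fun i _ => hri i)
  have hεpos : 0 < ε := hRpos.trans hεl
  rcases F.eq_empty_or_nonempty with hFe | hFne
  · simp [hFe]
  -- bound ε + R
  have hsplit : R = (∏ i ∈ range (n - 1), r i) * r (n - 1) := by
    rw [hR, ← Finset.prod_range_succ, Nat.sub_add_cancel hn]
  have hεR : ε + R ≤ (1 + 1 / rmin) * R := by
    have h1 : ε * r (n - 1) ≤ R := by
      rw [hsplit]
      exact mul_le_mul_of_nonneg_right hεu (hri _).le
    have h2 : rmin ≤ r (n - 1) := (hr _).1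
    have h3 : ε * rmin ≤ R := by nlinarith
    have : ε ≤ R / rmin := (le_div_iff₀ hrmin).2 h3
    have h4 : R / rmin = (1 / rmin) * R := by field_simp
    linarith
  have hεR0 : 0 ≤ ε + R := by positivity
  -- cover cthickening by enlarged balls
  have hsub : cthickening ε F ⊆ ⋃ j, closedBall (x j) (ε + R) := by
    intro p hp
    rw [mem_cthickening_iff] at hp
    have hinf : infDist p F ≤ ε :=
      ENNReal.toReal_le_of_le_ofReal hεpos.le hp
    obtain ⟨y, hyF, hyd⟩ := hF.exists_infDist_eq_dist hFne p
    obtain ⟨_, ⟨j, rfl⟩, hj⟩ := hcover hyF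
    refine mem_iUnion.2 ⟨j, ?_⟩
    have : dist p (x j) ≤ dist p y + dist y (x j) := dist_triangle _ _ _
    simp only [mem_closedBall] at hj ⊢
    rw [← hyd] at *
    linarith [hj, hinf, this]
  have hball : ∀ j, volume (closedBall (x j) (ε + R)) =
      ENNReal.ofReal ((ε + R) ^ d) * volume (ball (0 : EuclideanSpace ℝ (Fin d)) 1) := by
    intro j
    rw [Measure.addHaar_closedBall volume (x j) hεR0, finrank_euclideanSpace_fin]
  calc volume (cthickening ε F)
      ≤ ∑ j, volume (closedBall (x j) (ε + R)) :=
        (measure_mono hsub).trans (measure_iUnion_fintype_le _ _)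
    _ = (∏ i ∈ range n, N i : ℕ) *
          (ENNReal.ofReal ((ε + R) ^ d) * volume (ball (0 : EuclideanSpace ℝ (Fin d)) 1)) := by
        simp [hball, Finset.sum_const, nsmul_eq_mul]
    _ ≤ ENNReal.ofReal ((1 + 1 / rmin) ^ d * ∏ i ∈ range n, (r i ^ d * N i)) *
        volume (ball (0 : EuclideanSpace ℝ (Fin d)) 1) := by
        rw [← mul_assoc]
        apply mul_le_mul_left
        have hNcast : ((∏ i ∈ range n, N i : ℕ) : ENNReal) =
            ENNReal.ofReal (∏ i ∈ range n, (N i : ℝ)) := by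
          rw [ENNReal.ofReal_prod_of_nonneg (fun i _ => Nat.cast_nonneg _)]
          push_cast
          simp [ENNReal.ofReal_natCast]
        rw [hNcast, ← ENNReal.ofReal_mul (by positivity)]
        apply ENNReal.ofReal_le_ofReal
        have hprod : ∏ i ∈ range n, (r i ^ d * (N i : ℝ)) =
            R ^ d * ∏ i ∈ range n, (N i : ℝ) := by
          rw [Finset.prod_mul_distrib, ← Finset.prod_pow]
        rw [hprod]
        have hpow : (ε + R) ^ d ≤ ((1 + 1 / rmin) * R) ^ d :=
          pow_le_pow_left₀ hεR0 hεR d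
        have hNpos : (0:ℝ) ≤ ∏ i ∈ range n, (N i : ℝ) :=
          Finset.prod_nonneg fun i _ => Nat.cast_nonneg _
        calc (∏ i ∈ range n, (N i : ℝ)) * (ε + R) ^ d
            ≤ (∏ i ∈ range n, (N i : ℝ)) * ((1 + 1 / rmin) * R) ^ d :=
              mul_le_mul_of_nonneg_left hpow hNpos
          _ = (1 + 1 / rmin) ^ d * (R ^ d * ∏ i ∈ range n, (N i : ℝ)) := by rw [mul_pow]; ring
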